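/- Let S and T be balanced bitstrings. Then a unit of area (x,y) is between S and T if and only if (2x+y+1, x+y) is between w(S) and w(T). Consequently, the area between w(S) and w(T) equals the area between S and T. -/

import Mathlib

/-- The substitution `w`, simultaneously replacing each `0` by `001` and each
`1` by `01`. -/
def wsub (S : List Bool) : List Bool :=
  S.flatMap (fun b => if b then [false, true] else [false, false, true])

/-- Two bitstrings are balanced if they have the same length and the same
number of ones. -/
def BalancedBits (S T : List Bool) : Prop :=
  S.length = T.length ∧ S.count true = T.count true

/-- `(x, y)` is below `S` if some prefix of `S` has at most `x` zeros and at
least `y + 1` ones. -/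
def Below (S : List Bool) (x y : ℤ) : Prop :=
  ∃ n ≤ S.length, ((S.take n).count false : ℤ) ≤ x ∧ y + 1 ≤ ((S.take n).count true : ℤ)

/-- `(x, y)` is above `S` if some prefix of `S` has at most `y` ones and at
least `x + 1` zeros. -/
def Above (S : List Bool) (x y : ℤ) : Prop :=
  ∃ n ≤ S.length, ((S.take n).count true : ℤ) ≤ y ∧ x + 1 ≤ ((S.take n).count false : ℤ)

/-- `(x, y)` is between `S` and `T` if it is above one and below the other. -/
def Between (S T : List Bool) (x y : ℤ) : Prop :=
  (Above S x y ∧ Below T x y) ∨ (Below S x y ∧ Above T x y)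

section Aux

lemma cnt_len (l : List Bool) : l.count true + l.count false = l.length := by
  induction l with
  | nil => simp
  | cons c t ih => cases c <;> simp [List.count_cons] <;> omega

lemma cnt_take (l : List Bool) {n : ℕ} (hn : n ≤ l.length) :
    (l.take n).count true + (l.take n).count false = n := by
  rw [cnt_len, List.length_take, min_eq_left hn]

lemma wsub_cons (c : Bool) (t : List Bool) :
    wsub (c :: t) = (if c then [false, true] else [false, false, true]) ++ wsub t := by
  simp [wsub]

lemma wsub_append (A B : List Bool) : wsub (A ++ B) = wsub A ++ wsub B := by
  simp [wsub]

lemma wsub_ct (P : List Bool) : (wsub P).count true = P.length := by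
  induction P with
  | nil => rfl
  | cons c t ih => cases c <;> simp [wsub, List.count_cons] at ih ⊢ <;> omega

lemma wsub_cf (P : List Bool) : (wsub P).count false = P.length + P.count false := by
  induction P with
  | nil => rfl
  | cons c t ih => cases c <;> simp [wsub, List.count_cons] at ih ⊢ <;> omega

lemma count_take_mono (l : List Bool) (b : Bool) {m n : ℕ} (h : m ≤ n) :
    (l.take m).count b ≤ (l.take n).count b := by
  have h1 : (l.take n).take m = l.take m := by rw [List.take_take, min_eq_left h]
  rw [← h1]
  exact (List.take_sublist _ _).count_le b

lemma count_take_le (l : List Bool) (b : Bool) (n : ℕ) : (l.take n).count b ≤ l.count b :=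
  (List.take_sublist _ _).count_le b

lemma count_take_succ_le (l : List Bool) (b : Bool) (n : ℕ) :
    (l.take (n+1)).count b ≤ (l.take n).count b + 1 := by
  rw [List.take_succ, List.count_append]
  have : (l[n]?.toList).count b ≤ 1 := le_trans List.count_le_length (by
    cases l[n]? <;> simp)
  omega

set_option linter.unreachableTactic false in
set_option linter.unnecessarySeqFocus false in
set_option linter.unusedTactic false in
lemma lemA (S : List Bool) (m : ℕ) (hm : m ≤ (wsub S).length) :
    ∃ n ≤ S.length, ∃ e ≤ 2,
      ((wsub S).take m).count true = n ∧
      ((wsub S).take m).count false = n + (S.take n).count false + e ∧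
      (e = 2 → n < S.length ∧ (S.take (n+1)).count false = (S.take n).count false + 1) := by
  induction S generalizing m with
  | nil =>
      refine ⟨0, le_refl _, 0, by omega, ?_, ?_, by omega⟩ <;> simp [wsub] at hm ⊢ <;> omega
  | cons c t ih =>
      rw [wsub_cons] at hm ⊢
      set blk := (if c then [false, true] else [false, false, true]) with hblk
      have hbt : blk.count true = 1 := by cases c <;> simp [hblk]
      by_cases hsplit : m < blk.length
      · refine ⟨0, Nat.zero_le _, m, ?_, ?_, ?_, ?_⟩
        · cases c <;> simp [hblk] at hsplit ⊢ <;> omega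
        · rw [List.take_append_of_le_length (le_of_lt hsplit)]
          cases c <;> simp [hblk] at hsplit ⊢ <;> interval_cases m <;> simp
        · rw [List.take_append_of_le_length (le_of_lt hsplit)]
          cases c <;> simp [hblk] at hsplit ⊢ <;> interval_cases m <;> simp
        · intro he; subst he
          cases c <;> simp [hblk] at hsplit ⊢
      · push_neg at hsplit
        obtain ⟨m', rfl⟩ : ∃ m', m = blk.length + m' := ⟨m - blk.length, by omega⟩
        rw [List.length_append] at hm
        obtain ⟨n, hn, e, he, hct, hcf, h2⟩ := ih m' (by omega)
        have hbfc : blk.count false = (if c then 1 else 2) := by cases c <;> simp [hblk]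
        have htake : ((c :: t).take (n+1)).count false
            = (if c then 0 else 1) + (t.take n).count false := by
          cases c <;> simp [List.count_cons] <;> omega
        refine ⟨n + 1, by simpa using hn, e, he, ?_, ?_, ?_⟩
        · rw [List.take_length_add_append, List.count_append, hct, hbt]; omega
        · rw [List.take_length_add_append, List.count_append, hcf, hbfc, htake]
          cases c <;> simp <;> omega
        · intro hee
          obtain ⟨h1, h2⟩ := h2 hee
          refine ⟨by simpa using h1, ?_⟩
          have htake2 : ((c :: t).take (n+2)).count false
              = (if c then 0 else 1) + (t.take (n+1)).count false := by
            cases c <;> simp [List.count_cons] <;> omega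
          rw [htake2, htake, h2]
          cases c <;> simp <;> omega

lemma lemB (S : List Bool) (n : ℕ) (hn : n ≤ S.length) :
    ∃ m ≤ (wsub S).length,
      ((wsub S).take m).count true = n ∧
      ((wsub S).take m).count false = n + (S.take n).count false := by
  refine ⟨(wsub (S.take n)).length, ?_, ?_, ?_⟩ <;>
    rw [show wsub S = wsub (S.take n) ++ wsub (S.drop n) by
      rw [← wsub_append, List.take_append_drop]]
  · simp
  · rw [List.take_left, wsub_ct, List.length_take, min_eq_left hn]
  · rw [List.take_left, wsub_cf, List.length_take, min_eq_left hn]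

set_option linter.unnecessarySeqFocus false in
lemma lemC (S : List Bool) (n : ℕ) (hn : n < S.length) :
    ∃ m ≤ (wsub S).length,
      ((wsub S).take m).count true = n ∧
      ((wsub S).take m).count false = n + (S.take (n+1)).count false + 1 := by
  set c := S[n] with hc
  set e := (if c then 1 else 2) with he
  have hdec : wsub S = wsub (S.take n) ++ ((if c then [false,true] else [false,false,true]) ++ wsub (S.drop (n+1))) := by
    conv_lhs => rw [← List.take_append_drop n S, List.drop_eq_getElem_cons hn]
    rw [wsub_append]
    congr 1
  have htk : ((if c then [false,true] else [false,false,true]) ++ wsub (S.drop (n+1))).take e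
      = List.replicate e false := by
    cases hcv : c <;> simp [he, hcv, List.take_append_of_le_length]
  have hts : S.take (n+1) = S.take n ++ [c] := by
    rw [List.take_succ]
    simp [← hc, List.getElem?_eq_getElem hn]
  refine ⟨(wsub (S.take n)).length + e, ?_, ?_, ?_⟩ <;> rw [hdec]
  · rw [List.length_append]
    have : e ≤ ((if c then [false,true] else [false,false,true]) ++ wsub (S.drop (n+1))).length := by
      cases hcv : c <;> simp [he, hcv]
    omega
  · rw [List.take_length_add_append, htk, List.count_append, wsub_ct, List.length_take, min_eq_left hn.le]
    simp [List.count_replicate]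
  · rw [List.take_length_add_append, htk, List.count_append, wsub_cf, List.length_take, min_eq_left hn.le,
      hts, List.count_append]
    cases hcv : c <;> simp [he, hcv, List.count_replicate] <;> omega

-- transfer lemmas
lemma below_from {T : List Bool} {x y : ℤ}
    (h : Below (wsub T) (2*x+y+1) (x+y)) : Below T x y := by
  obtain ⟨m, hm, hz, ho⟩ := h
  obtain ⟨n, hn, e, he, hct, hcf, -⟩ := lemA T m hm
  refine ⟨n, hn, ?_, ?_⟩
  · have := cnt_take T hn
    rw [hct] at ho; rw [hcf] at hz
    push_cast at *
    omega
  · have := cnt_take T hn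
    rw [hct] at ho; rw [hcf] at hz
    push_cast at *
    omega

lemma above_from {S : List Bool} {x y : ℤ}
    (h : Above (wsub S) (2*x+y+1) (x+y)) : Above S x y := by
  obtain ⟨m, hm, ho, hz⟩ := h
  obtain ⟨n, hn, e, he, hct, hcf, h2⟩ := lemA S m hm
  rw [hct] at ho; rw [hcf] at hz
  have hc := cnt_take S hn
  by_cases he2 : e = 2
  · obtain ⟨h1, hinc⟩ := h2 he2
    have hc1 := cnt_take S (show n + 1 ≤ S.length by omega)
    refine ⟨n+1, h1, ?_, ?_⟩ <;> push_cast at * <;> omega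
  · refine ⟨n, hn, ?_, ?_⟩ <;> push_cast at * <;> omega

lemma below_to {T : List Bool} {x y : ℤ} (hx : 0 ≤ x) (hy : 0 ≤ y)
    (hZ : x + 1 ≤ (T.count false : ℤ)) (h : Below T x y) :
    Below (wsub T) (2*x+y+1) (x+y) := by
  obtain ⟨n0, hn0, ha0, hb0⟩ := h
  set N : ℕ := (x + y + 1).toNat with hN
  have hNval : (N : ℤ) = x + y + 1 := by omega
  set P : ℕ → Prop := fun n => (T.take n).count false ≤ x.toNat with hP
  set n1 := Nat.findGreatest P T.length with hn1
  have hP0 : P 0 := by simp [hP]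
  have hspec : P n1 := Nat.findGreatest_spec (Nat.zero_le _) hP0
  have hub : n1 ≤ T.length := Nat.findGreatest_le _
  have hge : n0 ≤ n1 := Nat.le_findGreatest hn0 (by simp only [hP]; omega)
  have hbmono : (T.take n0).count true ≤ (T.take n1).count true := count_take_mono _ _ hge
  have hspec' : ((T.take n1).count false : ℤ) ≤ x := by
    simp only [hP] at hspec; omega
  have hNn1 : N ≤ n1 := by
    by_contra hlt
    push_neg at hlt
    have hcn1 := cnt_take T hub
    have hn1len : n1 < T.length := by
      rcases eq_or_lt_of_le hub with heq | hlt2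
      · exfalso
        have := hspec'
        rw [heq, List.take_length] at this
        omega
      · exact hlt2
    have hsucc : (T.take (n1+1)).count false ≤ (T.take n1).count false + 1 :=
      count_take_succ_le T false n1
    have hPn1s : P (n1+1) := by
      simp only [hP]
      push_cast at *
      omega
    exact absurd hPn1s (Nat.findGreatest_is_greatest (Nat.lt_succ_self n1) (by omega))
  have haN : ((T.take N).count false : ℤ) ≤ x := by
    calc ((T.take N).count false : ℤ) ≤ ((T.take n1).count false : ℤ) := by
          exact_mod_cast count_take_mono _ _ hNn1
      _ ≤ x := hspec'
  obtain ⟨m, hm, hct, hcf⟩ := lemB T N (le_trans hNn1 hub)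
  refine ⟨m, hm, ?_, ?_⟩ <;> omega

lemma above_to {S : List Bool} {x y : ℤ} (hx : 0 ≤ x) (hy : 0 ≤ y)
    (hZ : x + 1 ≤ (S.count false : ℤ)) (hO : y + 1 ≤ (S.count true : ℤ))
    (h : Above S x y) : Above (wsub S) (2*x+y+1) (x+y) := by
  obtain ⟨nA, hnA, hbA, haA⟩ := h
  set N : ℕ := (x + y + 1).toNat with hN
  have hNval : (N : ℤ) = x + y + 1 := by omega
  by_cases hlen : N ≤ S.length
  case neg =>
    refine ⟨(wsub S).length, le_refl _, ?_, ?_⟩ <;> rw [List.take_length]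
    · rw [wsub_ct]; have := cnt_len S; push_cast at *; omega
    · rw [wsub_cf]; have := cnt_len S; push_cast at *; omega
  case pos =>
    have haN : x + 1 ≤ ((S.take N).count false : ℤ) := by
      by_contra hcon
      push_neg at hcon
      rcases le_or_gt nA N with h1 | h1
      · have := count_take_mono S false h1
        omega
      · have hmono := count_take_mono S true h1.le
        have hcN := cnt_take S hlen
        omega
    have hn1 : N - 1 < S.length := by omega
    obtain ⟨m, hm, hct, hcf⟩ := lemC S (N-1) hn1
    have hNN : N - 1 + 1 = N := by omega
    rw [hNN] at hcf
    refine ⟨m, hm, ?_, ?_⟩ <;> omega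

end Aux

/-- `(x, y)` is between `S` and `T` iff `(2x + y + 1, x + y)` is between
`w(S)` and `w(T)`; consequently the area between `w(S)` and `w(T)` equals the
area between `S` and `T`. -/
theorem between_iff_and_area_preserved (S T : List Bool) (hbal : BalancedBits S T) :
    (∀ x y : ℤ, Between S T x y ↔ Between (wsub S) (wsub T) (2 * x + y + 1) (x + y)) ∧
    {p : ℤ × ℤ | Between (wsub S) (wsub T) p.1 p.2}.ncard =
      {p : ℤ × ℤ | Between S T p.1 p.2}.ncard := by
  obtain ⟨hlen, hones⟩ := hbal
  have hzeros : S.count false = T.count false := by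
    have h1 := cnt_len S
    have h2 := cnt_len T
    omega
  have hiff : ∀ x y : ℤ, Between S T x y ↔ Between (wsub S) (wsub T) (2 * x + y + 1) (x + y) := by
    intro x y
    constructor
    · rintro (⟨hA, hB⟩ | ⟨hB, hA⟩)
      · obtain ⟨nA, hnA, hbA, haA⟩ := hA
        obtain ⟨nB, hnB, haB, hbB⟩ := hB
        have hx : 0 ≤ x := le_trans (by positivity) haB
        have hy : 0 ≤ y := le_trans (by positivity) hbA
        have hZS : x + 1 ≤ (S.count false : ℤ) :=
          le_trans haA (by exact_mod_cast count_take_le S false nA)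
        have hOT : y + 1 ≤ (T.count true : ℤ) :=
          le_trans hbB (by exact_mod_cast count_take_le T true nB)
        have hZT : x + 1 ≤ (T.count false : ℤ) := by rw [← hzeros]; exact hZS
        have hOS : y + 1 ≤ (S.count true : ℤ) := by rw [hones]; exact hOT
        exact Or.inl ⟨above_to hx hy hZS hOS ⟨nA, hnA, hbA, haA⟩,
          below_to hx hy hZT ⟨nB, hnB, haB, hbB⟩⟩
      · obtain ⟨nA, hnA, hbA, haA⟩ := hA
        obtain ⟨nB, hnB, haB, hbB⟩ := hB
        have hx : 0 ≤ x := le_trans (by positivity) haB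
        have hy : 0 ≤ y := le_trans (by positivity) hbA
        have hZT : x + 1 ≤ (T.count false : ℤ) :=
          le_trans haA (by exact_mod_cast count_take_le T false nA)
        have hOS : y + 1 ≤ (S.count true : ℤ) :=
          le_trans hbB (by exact_mod_cast count_take_le S true nB)
        have hZS : x + 1 ≤ (S.count false : ℤ) := by rw [hzeros]; exact hZT
        have hOT : y + 1 ≤ (T.count true : ℤ) := by rw [← hones]; exact hOS
        exact Or.inr ⟨below_to hx hy hZS ⟨nB, hnB, haB, hbB⟩,
          above_to hx hy hZT hOT ⟨nA, hnA, hbA, haA⟩⟩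
    · rintro (⟨hA, hB⟩ | ⟨hB, hA⟩)
      · exact Or.inl ⟨above_from hA, below_from hB⟩
      · exact Or.inr ⟨below_from hB, above_from hA⟩
  refine ⟨hiff, ?_⟩
  have hset : {p : ℤ × ℤ | Between (wsub S) (wsub T) p.1 p.2} =
      (fun p : ℤ × ℤ => (2 * p.1 + p.2 + 1, p.1 + p.2)) '' {p : ℤ × ℤ | Between S T p.1 p.2} := by
    ext ⟨u, v⟩
    simp only [Set.mem_image, Set.mem_setOf_eq, Prod.mk.injEq, Prod.exists]
    constructor
    · intro h
      refine ⟨u - v - 1, 2 * v - u + 1, ?_, by ring, by ring⟩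
      have := (hiff (u - v - 1) (2 * v - u + 1)).mpr
      apply this
      have e1 : 2 * (u - v - 1) + (2 * v - u + 1) + 1 = u := by ring
      have e2 : (u - v - 1) + (2 * v - u + 1) = v := by ring
      rw [e1, e2]
      exact h
    · rintro ⟨a, b, hab, rfl, rfl⟩
      exact (hiff a b).mp hab
  rw [hset]
  apply Set.ncard_image_of_injective
  intro p q hpq
  simp only [Prod.mk.injEq, Prod.ext_iff] at hpq ⊢
  omega
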